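/- Let P = (1−π₀)·P_{θ₀} + π₀·Q belong to the gross error model of the elliptical family, with θ₀ ∈ Θ, π₀ ∈ [0,1/2), and Q a probability on ℝ^p with Q(B) = 0 for every MVE B of P. If A = E(μ,Σ,r) is an MVE of P, then (1) P(A) = 1/2, and (2) lim_{ε→0+} P(E(μ,Σ,r+ε)) = 1/2. -/

import Mathlib

open MeasureTheory Matrix Filter Set
open scoped RealInnerProductSpace ENNReal

noncomputable section

/-- The quadratic form `vᵀ S⁻¹ v`. -/
def quadForm {p : ℕ} (S : Matrix (Fin p) (Fin p) ℝ) (v : EuclideanSpace ℝ (Fin p)) : ℝ :=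
  ⟪v, Matrix.toEuclideanLin S⁻¹ v⟫

/-- The elliptical density `det(S)^{-1/2} g((x-μ)ᵀ S⁻¹ (x-μ))`. -/
def ellDensity {p : ℕ} (g : ℝ → ℝ) (μ : EuclideanSpace ℝ (Fin p))
    (S : Matrix (Fin p) (Fin p) ℝ) (x : EuclideanSpace ℝ (Fin p)) : ℝ :=
  (Real.sqrt S.det)⁻¹ * g (quadForm S (x - μ))

/-- The elliptical probability measure `P_θ`, `θ = (μ, S)`. -/
def ellMeasure {p : ℕ} (g : ℝ → ℝ) (μ : EuclideanSpace ℝ (Fin p))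
    (S : Matrix (Fin p) (Fin p) ℝ) : Measure (EuclideanSpace ℝ (Fin p)) :=
  volume.withDensity fun x => ENNReal.ofReal (ellDensity g μ S x)

/-- Condition G1: a strictly decreasing sequence tending to 0 on which `g` strictly increases. -/
def CondG1 (g : ℝ → ℝ) : Prop :=
  ∃ t : ℕ → ℝ, StrictAnti t ∧ Tendsto t atTop (nhds 0) ∧ (∀ n, 0 < t n) ∧
    ∀ n, g (t n) < g (t (n + 1))

open Classical in
/-- Kullback-Leibler divergence `KL(μ‖ν) = ∫ log (dμ/dν) dμ`, with value `+∞` if `μ` is not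
absolutely continuous w.r.t. `ν` (or the integral diverges). -/
def KL {α : Type*} [MeasurableSpace α] (μ ν : Measure α) : EReal :=
  if μ ≪ ν ∧ Integrable (fun x => Real.log ((μ.rnDeriv ν x).toReal)) μ then
    ((∫ x, Real.log ((μ.rnDeriv ν x).toReal) ∂μ : ℝ) : EReal)
  else ⊤

/-- The ellipsoid `E(μ, S, r) = {x : (x-μ)ᵀ S⁻¹ (x-μ) ≤ r²}`. -/
def ellipsoid {p : ℕ} (μ : EuclideanSpace ℝ (Fin p)) (S : Matrix (Fin p) (Fin p) ℝ)
    (r : ℝ) : Set (EuclideanSpace ℝ (Fin p)) :=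
  {x | quadForm S (x - μ) ≤ r ^ 2}

/-- `A` is a minimum volume ellipsoid (MVE) of `P`: it is an ellipsoid of `P`-probability
at least `1/2` whose volume is minimal among all such ellipsoids. -/
def IsMVE {p : ℕ} (P : Measure (EuclideanSpace ℝ (Fin p)))
    (A : Set (EuclideanSpace ℝ (Fin p))) : Prop :=
  (∃ (μ : EuclideanSpace ℝ (Fin p)) (S : Matrix (Fin p) (Fin p) ℝ) (r : ℝ),
    S.PosDef ∧ 0 < r ∧ A = ellipsoid μ S r) ∧
  (1 : ℝ≥0∞) / 2 ≤ P A ∧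
  ∀ (μ' : EuclideanSpace ℝ (Fin p)) (S' : Matrix (Fin p) (Fin p) ℝ) (r' : ℝ),
    S'.PosDef → 0 < r' → (1 : ℝ≥0∞) / 2 ≤ P (ellipsoid μ' S' r') →
      volume A ≤ volume (ellipsoid μ' S' r')

/-- The gross error model contamination `(1-π₀)·P_θ₀ + π₀·Q`. -/
def gemMeasure {p : ℕ} (g : ℝ → ℝ) (μ₀ : EuclideanSpace ℝ (Fin p))
    (S₀ : Matrix (Fin p) (Fin p) ℝ) (π₀ : ℝ)
    (Q : Measure (EuclideanSpace ℝ (Fin p))) : Measure (EuclideanSpace ℝ (Fin p)) :=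
  ENNReal.ofReal (1 - π₀) • ellMeasure g μ₀ S₀ + ENNReal.ofReal π₀ • Q

open scoped Topology

section Helpers

open scoped Pointwise

variable {p : ℕ}

lemma quadForm_eq_dot (S : Matrix (Fin p) (Fin p) ℝ) (v : EuclideanSpace ℝ (Fin p)) :
    quadForm S v = dotProduct (star (WithLp.equiv 2 _ v)) (S⁻¹ *ᵥ (WithLp.equiv 2 _ v)) := by
  rw [quadForm, EuclideanSpace.inner_eq_star_dotProduct, dotProduct_comm]; rfl

lemma quadForm_pos {S : Matrix (Fin p) (Fin p) ℝ} (hS : S.PosDef)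
    {v : EuclideanSpace ℝ (Fin p)} (hv : v ≠ 0) : 0 < quadForm S v := by
  rw [quadForm_eq_dot]
  exact hS.inv.dotProduct_mulVec_pos (fun h => hv ((WithLp.equiv 2 _).injective h))

lemma quadForm_nonneg {S : Matrix (Fin p) (Fin p) ℝ} (hS : S.PosDef)
    (v : EuclideanSpace ℝ (Fin p)) : 0 ≤ quadForm S v := by
  rcases eq_or_ne v 0 with rfl | hv
  · simp [quadForm]
  · exact (quadForm_pos hS hv).le

lemma quadForm_smul (S : Matrix (Fin p) (Fin p) ℝ) (c : ℝ) (v : EuclideanSpace ℝ (Fin p)) :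
    quadForm S (c • v) = c ^ 2 * quadForm S v := by
  simp only [quadForm, _root_.map_smul, real_inner_smul_left, real_inner_smul_right, sq]
  ring

lemma continuous_quadForm (S : Matrix (Fin p) (Fin p) ℝ) : Continuous (quadForm S) :=
  continuous_id.inner ((Matrix.toEuclideanLin S⁻¹).continuous_of_finiteDimensional)

lemma isClosed_ellipsoid (μ : EuclideanSpace ℝ (Fin p)) (S : Matrix (Fin p) (Fin p) ℝ)
    (r : ℝ) : IsClosed (ellipsoid μ S r) :=
  isClosed_le ((continuous_quadForm S).comp (continuous_id.sub continuous_const))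
    continuous_const

lemma ellipsoid_eq_vadd_smul (μ : EuclideanSpace ℝ (Fin p)) (S : Matrix (Fin p) (Fin p) ℝ)
    {t : ℝ} (ht : 0 < t) :
    ellipsoid μ S t = μ +ᵥ t • {v : EuclideanSpace ℝ (Fin p) | quadForm S v ≤ 1} := by
  ext x
  rw [Set.mem_vadd_set_iff_neg_vadd_mem, Set.mem_smul_set_iff_inv_smul_mem₀ ht.ne']
  have h1 : (-μ) +ᵥ x = x - μ := by
    simp [vadd_eq_add, neg_add_eq_sub]
  rw [h1, Set.mem_setOf_eq, quadForm_smul]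
  constructor
  · intro h
    have h' : quadForm S (x - μ) ≤ t ^ 2 := h
    show t⁻¹ ^ 2 * quadForm S (x - μ) ≤ 1
    calc t⁻¹ ^ 2 * quadForm S (x - μ) ≤ t⁻¹ ^ 2 * t ^ 2 := by
          apply mul_le_mul_of_nonneg_left h' (by positivity)
      _ = 1 := by field_simp
  · intro h
    show quadForm S (x - μ) ≤ t ^ 2
    have h' : t⁻¹ ^ 2 * quadForm S (x - μ) ≤ 1 := h
    have := mul_le_mul_of_nonneg_left h' (le_of_lt (show (0:ℝ) < t ^ 2 by positivity))
    calc quadForm S (x - μ) = t ^ 2 * (t⁻¹ ^ 2 * quadForm S (x - μ)) := by field_simp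
      _ ≤ t ^ 2 * 1 := by nlinarith [h']
      _ = t ^ 2 := by ring

lemma volume_ellipsoid (μ : EuclideanSpace ℝ (Fin p)) (S : Matrix (Fin p) (Fin p) ℝ)
    {t : ℝ} (ht : 0 < t) :
    volume (ellipsoid μ S t) = ENNReal.ofReal (t ^ p) *
      volume {v : EuclideanSpace ℝ (Fin p) | quadForm S v ≤ 1} := by
  rw [ellipsoid_eq_vadd_smul μ S ht, measure_vadd, Measure.addHaar_smul]
  rw [finrank_euclideanSpace_fin, abs_of_nonneg (by positivity)]

lemma quadForm_zero (S : Matrix (Fin p) (Fin p) ℝ) : quadForm S 0 = 0 := by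
  simp [quadForm]

lemma exists_quadForm_lower_bound (hp : 1 ≤ p) {S : Matrix (Fin p) (Fin p) ℝ}
    (hS : S.PosDef) : ∃ m > 0, ∀ v : EuclideanSpace ℝ (Fin p), m * ‖v‖ ^ 2 ≤ quadForm S v := by
  have hv₀ : (EuclideanSpace.single (⟨0, hp⟩ : Fin p) (1:ℝ)) ∈
      Metric.sphere (0 : EuclideanSpace ℝ (Fin p)) 1 := by
    simp [mem_sphere_zero_iff_norm, EuclideanSpace.norm_single]
  obtain ⟨u, hu, hmin⟩ := (isCompact_sphere (0 : EuclideanSpace ℝ (Fin p)) 1).exists_isMinOn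
    ⟨_, hv₀⟩ ((continuous_quadForm S).continuousOn)
  have hunorm : ‖u‖ = 1 := mem_sphere_zero_iff_norm.mp hu
  have hu0 : u ≠ 0 := by
    intro h; rw [h, norm_zero] at hunorm; norm_num at hunorm
  refine ⟨quadForm S u, quadForm_pos hS hu0, fun v => ?_⟩
  rcases eq_or_ne v 0 with rfl | hv
  · simp [quadForm_zero]
  · have hn : ‖v‖ ≠ 0 := norm_ne_zero_iff.mpr hv
    have hmem : ‖v‖⁻¹ • v ∈ Metric.sphere (0 : EuclideanSpace ℝ (Fin p)) 1 := by
      rw [mem_sphere_zero_iff_norm, norm_smul, norm_inv, norm_norm]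
      field_simp
    have h1 := hmin hmem
    have h2 : quadForm S (‖v‖⁻¹ • v) = ‖v‖⁻¹ ^ 2 * quadForm S v := quadForm_smul S _ v
    have h3 : quadForm S u ≤ ‖v‖⁻¹ ^ 2 * quadForm S v := by rw [← h2]; exact h1
    have h4 : (0:ℝ) < ‖v‖ := lt_of_le_of_ne (norm_nonneg v) (Ne.symm hn)
    have h5 : ‖v‖⁻¹ = 1 / ‖v‖ := by field_simp
    have := mul_le_mul_of_nonneg_left h3 (le_of_lt (show (0:ℝ) < ‖v‖^2 by positivity))
    calc quadForm S u * ‖v‖ ^ 2 = ‖v‖ ^ 2 * quadForm S u := by ring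
      _ ≤ ‖v‖ ^ 2 * (‖v‖⁻¹ ^ 2 * quadForm S v) := this
      _ = quadForm S v := by field_simp

lemma ellipsoid_isCompact (hp : 1 ≤ p) (μ : EuclideanSpace ℝ (Fin p))
    {S : Matrix (Fin p) (Fin p) ℝ} (hS : S.PosDef) (r : ℝ) :
    IsCompact (ellipsoid μ S r) := by
  obtain ⟨m, hm, hbound⟩ := exists_quadForm_lower_bound hp hS
  apply Metric.isCompact_of_isClosed_isBounded (isClosed_ellipsoid μ S r)
  apply Metric.isBounded_closedBall (x := μ) (r := Real.sqrt (r ^ 2 / m)) |>.subset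
  intro x hx
  have h1 : quadForm S (x - μ) ≤ r ^ 2 := hx
  have h2 := hbound (x - μ)
  rw [Metric.mem_closedBall, dist_eq_norm]
  have h3 : ‖x - μ‖ ^ 2 ≤ r ^ 2 / m := by
    rw [le_div_iff₀ hm]; nlinarith
  calc ‖x - μ‖ = Real.sqrt (‖x - μ‖ ^ 2) := by
        rw [Real.sqrt_sq (norm_nonneg _)]
    _ ≤ Real.sqrt (r ^ 2 / m) := Real.sqrt_le_sqrt h3

lemma ball_subset_ellipsoid (μ : EuclideanSpace ℝ (Fin p)) (S : Matrix (Fin p) (Fin p) ℝ)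
    {r : ℝ} (hr : 0 < r) :
    ∃ δ > 0, Metric.ball μ δ ⊆ ellipsoid μ S r := by
  set L := LinearMap.toContinuousLinearMap (Matrix.toEuclideanLin S⁻¹) with hL
  have hq : ∀ v : EuclideanSpace ℝ (Fin p), quadForm S v ≤ ‖L‖ * ‖v‖ ^ 2 := by
    intro v
    have h1 : quadForm S v = ⟪v, L v⟫ := rfl
    have h2 := real_inner_le_norm v (L v)
    have h3 := L.le_opNorm v
    rw [h1]
    nlinarith [norm_nonneg v, norm_nonneg (L v)]
  have hC : (0:ℝ) < ‖L‖ + 1 := by positivity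
  refine ⟨r / Real.sqrt (‖L‖ + 1), by positivity, fun x hx => ?_⟩
  have hδ : dist x μ < r / Real.sqrt (‖L‖ + 1) := hx
  rw [dist_eq_norm] at hδ
  have hs : Real.sqrt (‖L‖ + 1) ^ 2 = ‖L‖ + 1 := Real.sq_sqrt hC.le
  have hs0 : (0:ℝ) < Real.sqrt (‖L‖ + 1) := Real.sqrt_pos.mpr hC
  show quadForm S (x - μ) ≤ r ^ 2
  have h4 := hq (x - μ)
  have h5 : ‖x - μ‖ ^ 2 ≤ (r / Real.sqrt (‖L‖ + 1)) ^ 2 := by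
    nlinarith [norm_nonneg (x - μ)]
  have h6 : (r / Real.sqrt (‖L‖ + 1)) ^ 2 = r ^ 2 / (‖L‖ + 1) := by
    rw [div_pow, hs]
  calc quadForm S (x - μ) ≤ ‖L‖ * ‖x - μ‖ ^ 2 := h4
    _ ≤ ‖L‖ * (r ^ 2 / (‖L‖ + 1)) := mul_le_mul_of_nonneg_left (h5.trans_eq h6) (norm_nonneg L)
    _ ≤ (‖L‖ + 1) * (r ^ 2 / (‖L‖ + 1)) := by
        apply mul_le_mul_of_nonneg_right (by linarith) (div_nonneg (sq_nonneg r) hC.le)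
    _ = r ^ 2 := by rw [mul_comm, div_mul_cancel₀ _ hC.ne']

lemma volume_ellipsoid_pos (μ : EuclideanSpace ℝ (Fin p)) (S : Matrix (Fin p) (Fin p) ℝ)
    {r : ℝ} (hr : 0 < r) : 0 < volume (ellipsoid μ S r) := by
  obtain ⟨δ, hδ, hsub⟩ := ball_subset_ellipsoid μ S hr
  exact lt_of_lt_of_le (Metric.measure_ball_pos volume μ hδ) (measure_mono hsub)

lemma gem_apply (g : ℝ → ℝ) (μ₀ : EuclideanSpace ℝ (Fin p))
    (S₀ : Matrix (Fin p) (Fin p) ℝ) (π₀ : ℝ) (Q : Measure (EuclideanSpace ℝ (Fin p)))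
    (s : Set (EuclideanSpace ℝ (Fin p))) :
    gemMeasure g μ₀ S₀ π₀ Q s =
      ENNReal.ofReal (1 - π₀) * ellMeasure g μ₀ S₀ s + ENNReal.ofReal π₀ * Q s := by
  simp [gemMeasure, Measure.add_apply, Measure.smul_apply, smul_eq_mul]

lemma ellMeasure_le (g : ℝ → ℝ) (hmono : AntitoneOn g (Set.Ici 0))
    (μ₀ : EuclideanSpace ℝ (Fin p)) {S₀ : Matrix (Fin p) (Fin p) ℝ} (hS₀ : S₀.PosDef)
    {B : Set (EuclideanSpace ℝ (Fin p))} (hB : MeasurableSet B) :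
    ellMeasure g μ₀ S₀ B ≤ ENNReal.ofReal ((Real.sqrt S₀.det)⁻¹ * g 0) * volume B := by
  rw [ellMeasure, withDensity_apply _ hB]
  calc ∫⁻ x in B, ENNReal.ofReal (ellDensity g μ₀ S₀ x) ∂volume
      ≤ ∫⁻ _ in B, ENNReal.ofReal ((Real.sqrt S₀.det)⁻¹ * g 0) ∂volume := by
        apply lintegral_mono
        intro x
        apply ENNReal.ofReal_le_ofReal
        apply mul_le_mul_of_nonneg_left _ (inv_nonneg.mpr (Real.sqrt_nonneg _))
        exact hmono Set.self_mem_Ici (quadForm_nonneg hS₀ _) (quadForm_nonneg hS₀ _)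
    _ = ENNReal.ofReal ((Real.sqrt S₀.det)⁻¹ * g 0) * volume B := by
        rw [setLIntegral_const]

lemma gem_ne_top (g : ℝ → ℝ) (hmono : AntitoneOn g (Set.Ici 0))
    (μ₀ : EuclideanSpace ℝ (Fin p)) {S₀ : Matrix (Fin p) (Fin p) ℝ} (hS₀ : S₀.PosDef)
    (π₀ : ℝ) (Q : Measure (EuclideanSpace ℝ (Fin p))) [IsProbabilityMeasure Q]
    {B : Set (EuclideanSpace ℝ (Fin p))} (hB : MeasurableSet B) (hvol : volume B ≠ ∞) :
    gemMeasure g μ₀ S₀ π₀ Q B ≠ ∞ := by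
  rw [gem_apply]
  apply ENNReal.add_ne_top.mpr
  constructor
  · apply ENNReal.mul_ne_top ENNReal.ofReal_ne_top
    exact ne_top_of_le_ne_top (ENNReal.mul_ne_top ENNReal.ofReal_ne_top hvol)
      (ellMeasure_le g hmono μ₀ hS₀ hB)
  · exact ENNReal.mul_ne_top ENNReal.ofReal_ne_top (measure_ne_top Q B)

end Helpers

theorem gem_mve_prob_half {p : ℕ} (hp : 1 ≤ p) (g : ℝ → ℝ)
    (hmono : AntitoneOn g (Set.Ici 0))
    (hnorm : ∫ x : EuclideanSpace ℝ (Fin p), g (‖x‖ ^ 2) = 1)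
    (μ₀ : EuclideanSpace ℝ (Fin p)) (S₀ : Matrix (Fin p) (Fin p) ℝ) (hS₀ : S₀.PosDef)
    (π₀ : ℝ) (hπ₀ : π₀ ∈ Set.Ico (0 : ℝ) (1 / 2))
    (Q : Measure (EuclideanSpace ℝ (Fin p))) [IsProbabilityMeasure Q]
    (hQ : ∀ B : Set (EuclideanSpace ℝ (Fin p)),
      IsMVE (gemMeasure g μ₀ S₀ π₀ Q) B → Q B = 0)
    (μ : EuclideanSpace ℝ (Fin p)) (S : Matrix (Fin p) (Fin p) ℝ) (hS : S.PosDef)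
    (r : ℝ) (hr : 0 < r)
    (hMVE : IsMVE (gemMeasure g μ₀ S₀ π₀ Q) (ellipsoid μ S r)) :
    gemMeasure g μ₀ S₀ π₀ Q (ellipsoid μ S r) = 1 / 2 ∧
      Filter.Tendsto (fun ε : ℝ => gemMeasure g μ₀ S₀ π₀ Q (ellipsoid μ S (r + ε)))
        (nhdsWithin 0 (Set.Ioi 0)) (nhds (1 / 2)) := by
  set P := gemMeasure g μ₀ S₀ π₀ Q with hPdef
  set A := ellipsoid μ S r with hAdef
  have hQA : Q A = 0 := hQ A hMVE
  have hhalf : (1 : ℝ≥0∞) / 2 ≤ P A := hMVE.2.1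
  have hcomp : IsCompact A := ellipsoid_isCompact hp μ hS r
  have hvolA_lt : volume A < ∞ := hcomp.measure_lt_top
  have hvolA_pos : 0 < volume A := volume_ellipsoid_pos μ S hr
  set D := {v : EuclideanSpace ℝ (Fin p) | quadForm S v ≤ 1} with hDdef
  have hvA : volume A = ENNReal.ofReal (r ^ p) * volume D := volume_ellipsoid μ S hr
  have hrp : (0:ℝ) < r ^ p := by positivity
  have hrp0 : ENNReal.ofReal (r ^ p) ≠ 0 := by
    simp only [ne_eq, ENNReal.ofReal_eq_zero, not_le]; exact hrp
  have hD_ne0 : volume D ≠ 0 := by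
    intro h; rw [hvA, h, mul_zero] at hvolA_pos; exact lt_irrefl _ hvolA_pos
  have hD_ne_top : volume D ≠ ∞ := by
    intro h
    rw [hvA, h, ENNReal.mul_top hrp0] at hvolA_lt
    exact (lt_irrefl _ hvolA_lt)
  -- the increasing sequence of radii
  set t : ℕ → ℝ := fun n => r * (1 - ((n : ℝ) + 2)⁻¹) with htdef
  have hn2 : ∀ n : ℕ, (0:ℝ) < (n : ℝ) + 2 := fun n => by positivity
  have hfrac : ∀ n : ℕ, ((n : ℝ) + 2)⁻¹ ≤ 1 / 2 := by
    intro n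
    rw [inv_eq_one_div]
    apply div_le_div_of_nonneg_left one_pos.le (by norm_num)
    · have : (0:ℝ) ≤ (n:ℝ) := Nat.cast_nonneg n
      linarith
  have htpos : ∀ n, 0 < t n := by
    intro n
    apply mul_pos hr
    have := hfrac n; linarith
  have htlt : ∀ n, t n < r := by
    intro n
    have h1 : (0:ℝ) < ((n : ℝ) + 2)⁻¹ := inv_pos.mpr (hn2 n)
    have : 1 - ((n : ℝ) + 2)⁻¹ < 1 := by linarith
    calc t n = r * (1 - ((n : ℝ) + 2)⁻¹) := rfl
      _ < r * 1 := by exact mul_lt_mul_of_pos_left this hr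
      _ = r := mul_one r
  have htmono : Monotone t := by
    intro a b hab
    apply mul_le_mul_of_nonneg_left _ hr.le
    have h1 : (a : ℝ) + 2 ≤ (b : ℝ) + 2 := by
      have := Nat.cast_le (α := ℝ).mpr hab; linarith
    have := inv_anti₀ (hn2 a) h1
    linarith
  have htlim : Tendsto t atTop (𝓝 r) := by
    have h1 : Tendsto (fun n : ℕ => ((n : ℝ) + 2)⁻¹) atTop (𝓝 0) := by
      apply tendsto_inv_atTop_zero.comp
      exact tendsto_atTop_add_const_right atTop 2 tendsto_natCast_atTop_atTop
    have h2 : Tendsto (fun n : ℕ => r * (1 - ((n : ℝ) + 2)⁻¹)) atTop (𝓝 (r * (1 - 0))) :=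
      (tendsto_const_nhds.sub h1).const_mul r
    simpa using h2
  -- the open ellipsoid
  set O := {x : EuclideanSpace ℝ (Fin p) | quadForm S (x - μ) < r ^ 2} with hOdef
  have hO_open : IsOpen O :=
    isOpen_lt ((continuous_quadForm S).comp (continuous_id.sub continuous_const))
      continuous_const
  have hsets_mono : Monotone (fun n => ellipsoid μ S (t n)) := by
    intro a b hab x hx
    have h1 : quadForm S (x - μ) ≤ t a ^ 2 := hx
    have h2 : t a ^ 2 ≤ t b ^ 2 := by
      apply pow_le_pow_left₀ (htpos a).le (htmono hab)
    exact le_trans h1 h2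
  have hUnion : ⋃ n, ellipsoid μ S (t n) = O := by
    ext x
    simp only [Set.mem_iUnion, Set.mem_setOf_eq]
    constructor
    · rintro ⟨n, hn⟩
      have h1 : quadForm S (x - μ) ≤ t n ^ 2 := hn
      have h2 : t n ^ 2 < r ^ 2 := by
        apply pow_lt_pow_left₀ (htlt n) (htpos n).le
        norm_num
      exact lt_of_le_of_lt h1 h2
    · intro hx
      have h1 : Tendsto (fun n => t n ^ 2) atTop (𝓝 (r ^ 2)) := htlim.pow 2
      have h2 : ∀ᶠ n in atTop, quadForm S (x - μ) < t n ^ 2 := h1.eventually_const_lt hx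
      obtain ⟨n, hn⟩ := h2.exists
      exact ⟨n, hn.le⟩
  have hA_sub : O ⊆ A := by
    intro x hx
    show quadForm S (x - μ) ≤ r ^ 2
    exact le_of_lt hx
  -- volume of O equals volume of A
  have hvolO : volume O = volume A := by
    have h1 : Tendsto (fun n => volume (ellipsoid μ S (t n))) atTop (𝓝 (volume O)) := by
      have := tendsto_measure_iUnion_atTop (μ := volume) hsets_mono
      rwa [hUnion] at this
    have h2 : Tendsto (fun n => volume (ellipsoid μ S (t n))) atTop (𝓝 (volume A)) := by
      have heq : (fun n => volume (ellipsoid μ S (t n)))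
          = fun n => ENNReal.ofReal (t n ^ p) * volume D := by
        funext n; exact volume_ellipsoid μ S (htpos n)
      rw [heq, hvA]
      apply ENNReal.Tendsto.mul_const _ (Or.inr hD_ne_top)
      exact ENNReal.tendsto_ofReal (htlim.pow p)
    exact tendsto_nhds_unique h1 h2
  have hdiff : volume (A \ O) = 0 := by
    rw [measure_diff hA_sub hO_open.measurableSet.nullMeasurableSet
      (hvolO ▸ hvolA_lt.ne), hvolO, tsub_self]
  have hPdiff : P (A \ O) = 0 := by
    rw [hPdef, gem_apply]
    have he : ellMeasure g μ₀ S₀ (A \ O) = 0 :=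
      (withDensity_absolutelyContinuous volume _) hdiff
    have hq : Q (A \ O) = 0 := measure_mono_null Set.diff_subset hQA
    rw [he, hq, mul_zero, mul_zero, add_zero]
  have hPO : P O = P A := by
    apply le_antisymm (measure_mono hA_sub)
    calc P A = P (O ∪ (A \ O)) := by rw [Set.union_diff_cancel hA_sub]
      _ ≤ P O + P (A \ O) := measure_union_le _ _
      _ = P O := by rw [hPdiff, add_zero]
  -- Part 1
  have hPA : P A = 1 / 2 := by
    by_contra hne
    have hlt : (1 : ℝ≥0∞) / 2 < P A := lt_of_le_of_ne hhalf (Ne.symm hne)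
    have h1 : Tendsto (fun n => P (ellipsoid μ S (t n))) atTop (𝓝 (P A)) := by
      have := tendsto_measure_iUnion_atTop (μ := P) hsets_mono
      rw [hUnion, hPO] at this
      exact this
    have h2 : ∀ᶠ n in atTop, (1 : ℝ≥0∞) / 2 < P (ellipsoid μ S (t n)) :=
      h1.eventually_const_lt hlt
    obtain ⟨n, hn⟩ := h2.exists
    have h3 := hMVE.2.2 μ S (t n) hS (htpos n) hn.le
    have h4 : volume (ellipsoid μ S (t n)) < volume A := by
      rw [volume_ellipsoid μ S (htpos n), hvA]
      apply ENNReal.mul_lt_mul_left hD_ne0 hD_ne_top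
      apply (ENNReal.ofReal_lt_ofReal_iff hrp).mpr
      apply pow_lt_pow_left₀ (htlt n) (htpos n).le
      omega
    exact absurd h3 (not_le.mpr h4)
  refine ⟨hPA, ?_⟩
  -- Part 2
  have hm : ∀ i j : ℝ, 0 < i → i ≤ j →
      ellipsoid μ S (r + i) ⊆ ellipsoid μ S (r + j) := by
    intro i j hi hij x hx
    have h1 : quadForm S (x - μ) ≤ (r + i) ^ 2 := hx
    have h2 : (r + i) ^ 2 ≤ (r + j) ^ 2 := by
      apply pow_le_pow_left₀ (by linarith) (by linarith)
    exact le_trans h1 h2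
  have hiInter : ⋂ ε ∈ Set.Ioi (0:ℝ), ellipsoid μ S (r + ε) = A := by
    ext x
    simp only [Set.mem_iInter, Set.mem_Ioi]
    constructor
    · intro h
      show quadForm S (x - μ) ≤ r ^ 2
      by_contra hq
      push_neg at hq
      set q := quadForm S (x - μ) with hqdef
      have hq0 : 0 ≤ q := quadForm_nonneg hS _
      have hsq : Real.sqrt q ^ 2 = q := Real.sq_sqrt hq0
      have hsq0 : 0 ≤ Real.sqrt q := Real.sqrt_nonneg q
      have hrsq : r < Real.sqrt q := by nlinarith
      have hε : (0:ℝ) < (Real.sqrt q - r) / 2 := by linarith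
      have := h _ hε
      have h2 : q ≤ (r + (Real.sqrt q - r) / 2) ^ 2 := this
      nlinarith
    · intro hx ε hε
      have h1 : quadForm S (x - μ) ≤ r ^ 2 := hx
      have h2 : r ^ 2 ≤ (r + ε) ^ 2 := by
        apply pow_le_pow_left₀ hr.le (by linarith)
      exact le_trans h1 h2
  have hf : ∃ ε > (0:ℝ), P (ellipsoid μ S (r + ε)) ≠ ∞ := by
    refine ⟨1, one_pos, ?_⟩
    apply gem_ne_top g hmono μ₀ hS₀ π₀ Q
      (isClosed_ellipsoid μ S (r + 1)).measurableSet
    exact (ellipsoid_isCompact hp μ hS (r + 1)).measure_lt_top.ne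
  have hmain := tendsto_measure_biInter_gt (μ := P) (a := (0:ℝ))
    (s := fun ε => ellipsoid μ S (r + ε))
    (fun ε _ => (isClosed_ellipsoid μ S (r + ε)).measurableSet.nullMeasurableSet)
    hm hf
  rw [show ⋂ ε > (0:ℝ), ellipsoid μ S (r + ε) = A from hiInter, hPA] at hmain
  exact hmain
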